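/- For all x ∈ U^ev, the element Σ S⁻¹(ad_{R₁}(x))·R₂ of U_ζ — that is, the image of the R-matrix R = Σ R₁ ⊗ R₂ under the ℂ-linear map determined by a⊗b ↦ S⁻¹(ad_a(x))·b — lies in U^ev. -/

import Mathlib

open scoped TensorProduct

noncomputable section
namespace RestrictedQsl2

inductive Gen : Type | E | F | K | Kinv

abbrev FA : Type := FreeAlgebra ℂ Gen

/-- `t = exp(πi/ℓ)`. -/
def tval (ℓ : ℕ) : ℂ := Complex.exp (Real.pi * Complex.I / ℓ)

/-- `s = exp(πi/(2ℓ))`, so `s² = t`. -/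
def sval (ℓ : ℕ) : ℂ := Complex.exp (Real.pi * Complex.I / (2 * ℓ))

/-- Defining relations of the restricted quantum group `U_ζ(sl₂)`. -/
inductive Rel (ℓ : ℕ) : FA → FA → Prop
  | KKinv : Rel ℓ (FreeAlgebra.ι ℂ Gen.K * FreeAlgebra.ι ℂ Gen.Kinv) 1
  | KinvK : Rel ℓ (FreeAlgebra.ι ℂ Gen.Kinv * FreeAlgebra.ι ℂ Gen.K) 1
  | KE : Rel ℓ (FreeAlgebra.ι ℂ Gen.K * FreeAlgebra.ι ℂ Gen.E)
      (tval ℓ • (FreeAlgebra.ι ℂ Gen.E * FreeAlgebra.ι ℂ Gen.K))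
  | KF : Rel ℓ (FreeAlgebra.ι ℂ Gen.K * FreeAlgebra.ι ℂ Gen.F)
      ((tval ℓ)⁻¹ • (FreeAlgebra.ι ℂ Gen.F * FreeAlgebra.ι ℂ Gen.K))
  | EF : Rel ℓ
      (FreeAlgebra.ι ℂ Gen.E * FreeAlgebra.ι ℂ Gen.F -
        FreeAlgebra.ι ℂ Gen.F * FreeAlgebra.ι ℂ Gen.E)
      ((tval ℓ - (tval ℓ)⁻¹)⁻¹ • (FreeAlgebra.ι ℂ Gen.K ^ 2 - FreeAlgebra.ι ℂ Gen.Kinv ^ 2))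
  | Epow : Rel ℓ (FreeAlgebra.ι ℂ Gen.E ^ ℓ) 0
  | Fpow : Rel ℓ (FreeAlgebra.ι ℂ Gen.F ^ ℓ) 0
  | Kpow : Rel ℓ (FreeAlgebra.ι ℂ Gen.K ^ (4 * ℓ)) 1

/-- The restricted quantum group `U_ζ(sl₂)`. -/
abbrev Uq (ℓ : ℕ) : Type := RingQuot (Rel ℓ)

def gE (ℓ : ℕ) : Uq ℓ := RingQuot.mkAlgHom ℂ (Rel ℓ) (FreeAlgebra.ι ℂ Gen.E)
def gF (ℓ : ℕ) : Uq ℓ := RingQuot.mkAlgHom ℂ (Rel ℓ) (FreeAlgebra.ι ℂ Gen.F)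
def gK (ℓ : ℕ) : Uq ℓ := RingQuot.mkAlgHom ℂ (Rel ℓ) (FreeAlgebra.ι ℂ Gen.K)
def gKinv (ℓ : ℕ) : Uq ℓ := RingQuot.mkAlgHom ℂ (Rel ℓ) (FreeAlgebra.ι ℂ Gen.Kinv)

/-- The Casimir element `C = FE + (K²t + K⁻²t⁻¹)/(t-t⁻¹)²`. -/
def Cas (ℓ : ℕ) : Uq ℓ :=
  gF ℓ * gE ℓ +
    ((tval ℓ - (tval ℓ)⁻¹) ^ 2)⁻¹ • (tval ℓ • gK ℓ ^ 2 + (tval ℓ)⁻¹ • gKinv ℓ ^ 2)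

/-- Quantum integer `[n]`. -/
def qint (ℓ n : ℕ) : ℂ := (tval ℓ ^ n - (tval ℓ)⁻¹ ^ n) / (tval ℓ - (tval ℓ)⁻¹)

/-- Quantum factorial `[n]!`. -/
def qfact (ℓ n : ℕ) : ℂ := ∏ k ∈ Finset.range n, qint ℓ (k + 1)

/-- The diagonal part `D` of the universal `R`-matrix. -/
def Dmat (ℓ : ℕ) : Uq ℓ ⊗[ℂ] Uq ℓ :=
  ((4 * ℓ : ℂ))⁻¹ • ∑ m ∈ Finset.range (4 * ℓ), ∑ n ∈ Finset.range (4 * ℓ),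
    (sval ℓ ^ (-(m * n : ℤ))) • ((gK ℓ ^ m) ⊗ₜ[ℂ] (gK ℓ ^ n))

/-- The universal `R`-matrix. -/
def Rmat (ℓ : ℕ) : Uq ℓ ⊗[ℂ] Uq ℓ :=
  Dmat ℓ * ∑ n ∈ Finset.range ℓ,
    (((tval ℓ - (tval ℓ)⁻¹) ^ n / qfact ℓ n) * tval ℓ ^ (n * (n - 1) / 2)) •
      ((gE ℓ ^ n) ⊗ₜ[ℂ] (gF ℓ ^ n))

/-- The even subalgebra `U^ev`, generated by `E`, `F`, `K²`, `K⁻²`. -/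
def Uev (ℓ : ℕ) : Subalgebra ℂ (Uq ℓ) :=
  Algebra.adjoin ℂ {gE ℓ, gF ℓ, gK ℓ ^ 2, gKinv ℓ ^ 2}

/-- The image of `U^ev ⊗ U^ev` in `U_ζ ⊗ U_ζ`. -/
def UevT (ℓ : ℕ) : Submodule ℂ (Uq ℓ ⊗[ℂ] Uq ℓ) :=
  LinearMap.range
    (TensorProduct.map (Subalgebra.toSubmodule (Uev ℓ)).subtype
      (Subalgebra.toSubmodule (Uev ℓ)).subtype)

/-- The adjoint action, as a linear map `x ⊗ r ↦ ad_r(x) = Σ r′ x S(r″)`. -/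
def adMap (ℓ : ℕ) (Δ : Uq ℓ →ₐ[ℂ] Uq ℓ ⊗[ℂ] Uq ℓ) (S : Uq ℓ →ₗ[ℂ] Uq ℓ) :
    Uq ℓ ⊗[ℂ] Uq ℓ →ₗ[ℂ] Uq ℓ :=
  LinearMap.mul' ℂ (Uq ℓ) ∘ₗ
    TensorProduct.map LinearMap.id (LinearMap.mul' ℂ (Uq ℓ)) ∘ₗ
    (TensorProduct.leftComm ℂ (Uq ℓ) (Uq ℓ) (Uq ℓ)).toLinearMap ∘ₗ
    TensorProduct.map LinearMap.id (TensorProduct.map LinearMap.id S) ∘ₗ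
    TensorProduct.map LinearMap.id Δ.toLinearMap

/-- `adL y : a ↦ ad_a(y)`, linear in `a`. -/
def adL (ℓ : ℕ) (Δ : Uq ℓ →ₐ[ℂ] Uq ℓ ⊗[ℂ] Uq ℓ) (S : Uq ℓ →ₗ[ℂ] Uq ℓ) (y : Uq ℓ) :
    Uq ℓ →ₗ[ℂ] Uq ℓ :=
  adMap ℓ Δ S ∘ₗ TensorProduct.mk ℂ (Uq ℓ) (Uq ℓ) y


/-! ### Auxiliary lemmas -/

section Aux

lemma sval_ne_zero (ℓ : ℕ) : sval ℓ ≠ 0 := Complex.exp_ne_zero _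

lemma sval_zpow (ℓ : ℕ) (k : ℤ) :
    sval ℓ ^ k = Complex.exp (k * (Real.pi * Complex.I / (2 * ℓ))) :=
  (Complex.exp_int_mul _ k).symm

lemma sval_sq {ℓ : ℕ} (hℓ : ℓ ≠ 0) : sval ℓ ^ (2 : ℕ) = tval ℓ := by
  rw [sval, tval, ← Complex.exp_nat_mul]
  congr 1
  have hl : (ℓ : ℂ) ≠ 0 := Nat.cast_ne_zero.mpr hℓ
  push_cast
  field_simp

lemma sval_zpow_eq_one_iff {ℓ : ℕ} (hℓ : ℓ ≠ 0) (k : ℤ) :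
    sval ℓ ^ k = 1 ↔ (4 * ℓ : ℤ) ∣ k := by
  rw [sval_zpow, Complex.exp_eq_one_iff]
  have hpi : (Real.pi : ℂ) ≠ 0 := Complex.ofReal_ne_zero.mpr Real.pi_ne_zero
  have hl : (ℓ : ℂ) ≠ 0 := Nat.cast_ne_zero.mpr hℓ
  constructor
  · rintro ⟨n, hn⟩
    refine ⟨n, ?_⟩
    field_simp at hn
    have h2 : (k:ℂ) * (Real.pi * Complex.I) = (4*ℓ*n) * (Real.pi * Complex.I) := by
      rw [hn]; ring
    have h3 : (k:ℂ) = 4*ℓ*n :=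
      mul_right_cancel₀ (mul_ne_zero hpi Complex.I_ne_zero) h2
    exact_mod_cast h3
  · rintro ⟨n, hn⟩
    refine ⟨n, ?_⟩
    subst hn
    push_cast
    field_simp
    ring

lemma sval_zpow_ne_one_of_odd {ℓ : ℕ} (hℓ : ℓ ≠ 0) {k : ℤ} (hk : Odd k) :
    sval ℓ ^ k ≠ 1 := by
  intro h
  have hdvd := (sval_zpow_eq_one_iff hℓ k).mp h
  have h2 : (2:ℤ) ∣ k := dvd_trans ⟨2*(ℓ:ℤ), by push_cast; ring⟩ hdvd
  exact (Int.not_odd_iff_even.mpr ⟨k/2, by omega⟩) hk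

/-! Relations in the quotient. -/

lemma gK_mul_gKinv (ℓ : ℕ) : gK ℓ * gKinv ℓ = 1 := by
  rw [gK, gKinv, ← map_mul, RingQuot.mkAlgHom_rel ℂ Rel.KKinv, map_one]

lemma gKinv_mul_gK (ℓ : ℕ) : gKinv ℓ * gK ℓ = 1 := by
  rw [gK, gKinv, ← map_mul, RingQuot.mkAlgHom_rel ℂ Rel.KinvK, map_one]

lemma gK_mul_gE (ℓ : ℕ) : gK ℓ * gE ℓ = tval ℓ • (gE ℓ * gK ℓ) := by
  rw [gK, gE, ← map_mul, RingQuot.mkAlgHom_rel ℂ Rel.KE, map_smul, map_mul]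

lemma gK_mul_gF (ℓ : ℕ) : gK ℓ * gF ℓ = (tval ℓ)⁻¹ • (gF ℓ * gK ℓ) := by
  rw [gK, gF, ← map_mul, RingQuot.mkAlgHom_rel ℂ Rel.KF, map_smul, map_mul]

lemma gKpow_mul_gKinvpow (ℓ : ℕ) (m : ℕ) : gK ℓ ^ m * gKinv ℓ ^ m = 1 := by
  induction m with
  | zero => simp
  | succ m ih =>
    have : gK ℓ ^ (m+1) * gKinv ℓ ^ (m+1) = gK ℓ ^ m * (gK ℓ * gKinv ℓ) * gKinv ℓ ^ m := by
      rw [pow_succ, pow_succ']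
      simp only [mul_assoc]
    rw [this, gK_mul_gKinv, mul_one, ih]

lemma gKinvpow_mul_gKpow (ℓ : ℕ) (m : ℕ) : gKinv ℓ ^ m * gK ℓ ^ m = 1 := by
  induction m with
  | zero => simp
  | succ m ih =>
    have : gKinv ℓ ^ (m+1) * gK ℓ ^ (m+1) = gKinv ℓ ^ m * (gKinv ℓ * gK ℓ) * gK ℓ ^ m := by
      rw [pow_succ, pow_succ']
      simp only [mul_assoc]
    rw [this, gKinv_mul_gK, mul_one, ih]

/-! Membership of generators in `Uev`. -/

lemma gE_mem (ℓ : ℕ) : gE ℓ ∈ Uev ℓ := Algebra.subset_adjoin (by simp)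
lemma gF_mem (ℓ : ℕ) : gF ℓ ∈ Uev ℓ := Algebra.subset_adjoin (by simp)
lemma gK2_mem (ℓ : ℕ) : gK ℓ ^ 2 ∈ Uev ℓ := Algebra.subset_adjoin (by simp)
lemma gKinv2_mem (ℓ : ℕ) : gKinv ℓ ^ 2 ∈ Uev ℓ := Algebra.subset_adjoin (by simp)

lemma gKpow_even_mem (ℓ : ℕ) {n : ℕ} (hn : Even n) : gK ℓ ^ n ∈ Uev ℓ := by
  obtain ⟨r, hr⟩ := hn
  have : n = 2 * r := by omega
  rw [this, pow_mul]
  exact pow_mem (gK2_mem ℓ) r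

/-! Weight vectors. -/

def IsWt (ℓ : ℕ) (d : ℤ) (z : Uq ℓ) : Prop :=
  gK ℓ * z = sval ℓ ^ d • (z * gK ℓ)

def wset (ℓ : ℕ) : Set (Uq ℓ) :=
  {z | z ∈ Uev ℓ ∧ ∃ d : ℤ, Even d ∧ IsWt ℓ d z}

lemma isWt_one (ℓ : ℕ) : IsWt ℓ 0 1 := by
  simp [IsWt]

lemma isWt_mul {ℓ : ℕ} {d e : ℤ} {z w : Uq ℓ} (hz : IsWt ℓ d z) (hw : IsWt ℓ e w) :
    IsWt ℓ (d + e) (z * w) := by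
  unfold IsWt at *
  rw [← mul_assoc, hz, smul_mul_assoc, mul_assoc, hw, mul_smul_comm, smul_smul,
    ← zpow_add₀ (sval_ne_zero ℓ), ← mul_assoc]

lemma isWt_gE {ℓ : ℕ} (hℓ : ℓ ≠ 0) : IsWt ℓ 2 (gE ℓ) := by
  unfold IsWt
  rw [gK_mul_gE]
  congr 1
  rw [show ((2:ℤ)) = ((2:ℕ):ℤ) by norm_num, zpow_natCast, sval_sq hℓ]

lemma isWt_gF {ℓ : ℕ} (hℓ : ℓ ≠ 0) : IsWt ℓ (-2) (gF ℓ) := by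
  unfold IsWt
  rw [gK_mul_gF]
  congr 1
  rw [show ((-2:ℤ)) = -((2:ℕ):ℤ) by norm_num, zpow_neg, zpow_natCast, sval_sq hℓ]

lemma isWt_gK2 (ℓ : ℕ) : IsWt ℓ 0 (gK ℓ ^ 2) := by
  unfold IsWt
  rw [zpow_zero, one_smul, ← pow_succ', ← pow_succ]

lemma isWt_gKinv2 (ℓ : ℕ) : IsWt ℓ 0 (gKinv ℓ ^ 2) := by
  unfold IsWt
  rw [zpow_zero, one_smul]
  have h : gK ℓ * gKinv ℓ ^ 2 = gKinv ℓ := by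
    rw [pow_two, ← mul_assoc, gK_mul_gKinv, one_mul]
  have h' : gKinv ℓ ^ 2 * gK ℓ = gKinv ℓ := by
    rw [pow_two, mul_assoc, gKinv_mul_gK, mul_one]
  rw [h, h']

open scoped Pointwise in
lemma uev_le_span_wset {ℓ : ℕ} (hℓ : ℓ ≠ 0) {z : Uq ℓ} (hz : z ∈ Uev ℓ) :
    z ∈ Submodule.span ℂ (wset ℓ) := by
  have hsub : wset ℓ * wset ℓ ⊆ wset ℓ := by
    rintro _ ⟨a, ha, b, hb, rfl⟩
    obtain ⟨haU, d, hd, hda⟩ := ha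
    obtain ⟨hbU, e, he, heb⟩ := hb
    exact ⟨mul_mem haU hbU, d + e, hd.add he, isWt_mul hda heb⟩
  induction hz using Algebra.adjoin_induction with
  | mem a ha =>
    apply Submodule.subset_span
    simp only [Set.mem_insert_iff, Set.mem_singleton_iff] at ha
    rcases ha with rfl | rfl | rfl | rfl
    · exact ⟨gE_mem ℓ, 2, by norm_num, isWt_gE hℓ⟩
    · exact ⟨gF_mem ℓ, -2, by norm_num, isWt_gF hℓ⟩
    · exact ⟨gK2_mem ℓ, 0, Even.zero, isWt_gK2 ℓ⟩
    · exact ⟨gKinv2_mem ℓ, 0, Even.zero, isWt_gKinv2 ℓ⟩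
  | algebraMap r =>
    rw [Algebra.algebraMap_eq_smul_one]
    exact Submodule.smul_mem _ _
      (Submodule.subset_span ⟨one_mem _, 0, Even.zero, isWt_one ℓ⟩)
  | add a b _ _ ha hb => exact add_mem ha hb
  | mul a b _ _ ha hb =>
    have h := Submodule.mul_mem_mul ha hb
    rw [Submodule.span_mul_span] at h
    exact Submodule.span_mono hsub h

lemma conj_pow_of_isWt {ℓ : ℕ} {d : ℤ} {z : Uq ℓ} (h : IsWt ℓ d z) (m : ℕ) :
    gK ℓ ^ m * z * gKinv ℓ ^ m = (sval ℓ ^ (d * m)) • z := by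
  induction m with
  | zero => simp
  | succ m ih =>
    have h1 : gK ℓ ^ (m+1) * z * gKinv ℓ ^ (m+1)
        = gK ℓ * (gK ℓ ^ m * z * gKinv ℓ ^ m) * gKinv ℓ := by
      rw [pow_succ' (gK ℓ) m, pow_succ (gKinv ℓ) m]
      simp only [mul_assoc]
    have h2 : gK ℓ * z * gKinv ℓ = sval ℓ ^ d • z := by
      rw [h, smul_mul_assoc, mul_assoc, gK_mul_gKinv, mul_one]
    rw [h1, ih, mul_smul_comm, smul_mul_assoc, h2, smul_smul,
      ← zpow_add₀ (sval_ne_zero ℓ)]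
    congr 2
    push_cast
    ring

/-- The key vanishing/evenness lemma. -/
lemma G_mem {ℓ : ℕ} (hℓ : ℓ ≠ 0) (n : ℕ) {z : Uq ℓ} (hz : z ∈ Uev ℓ) :
    (∑ m ∈ Finset.range (4*ℓ), (sval ℓ ^ (-(m*n : ℤ))) • (gK ℓ ^ m * z * gKinv ℓ ^ m))
      * gK ℓ ^ n ∈ Uev ℓ := by
  set φ : Uq ℓ →ₗ[ℂ] Uq ℓ :=
    (LinearMap.mulRight ℂ (gK ℓ ^ n)).comp
      (∑ m ∈ Finset.range (4*ℓ), (sval ℓ ^ (-(m*n : ℤ))) •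
        ((LinearMap.mulRight ℂ (gKinv ℓ ^ m)).comp (LinearMap.mulLeft ℂ (gK ℓ ^ m)))) with hφ
  have hφ_apply : ∀ w : Uq ℓ,
      φ w = (∑ m ∈ Finset.range (4*ℓ),
        (sval ℓ ^ (-(m*n : ℤ))) • (gK ℓ ^ m * w * gKinv ℓ ^ m)) * gK ℓ ^ n := by
    intro w
    simp only [hφ, LinearMap.comp_apply, LinearMap.sum_apply, LinearMap.smul_apply,
      LinearMap.mulRight_apply, LinearMap.mulLeft_apply]
  rw [← hφ_apply]
  have hspan := uev_le_span_wset hℓ hz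
  clear hz
  induction hspan using Submodule.span_induction with
  | mem w hw =>
    obtain ⟨hwU, d, hd, hwt⟩ := hw
    have hval : φ w = (∑ m ∈ Finset.range (4*ℓ), (sval ℓ ^ (d - n)) ^ m) • (w * gK ℓ ^ n) := by
      rw [hφ_apply, Finset.sum_smul, Finset.sum_mul]
      refine Finset.sum_congr rfl fun m _ => ?_
      rw [conj_pow_of_isWt hwt m, smul_smul, ← zpow_add₀ (sval_ne_zero ℓ), smul_mul_assoc]
      congr 1
      rw [show (-(m*n : ℤ) + d * m) = (d - n) * m by push_cast; ring, zpow_mul, zpow_natCast]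
    rw [hval]
    rcases Nat.even_or_odd n with hne | hno
    · exact Subalgebra.smul_mem _ (mul_mem hwU (gKpow_even_mem ℓ hne)) _
    · have hodd : Odd (d - (n:ℤ)) := by
        rcases hno with ⟨k, hk⟩
        rcases hd with ⟨r, hr⟩
        exact ⟨r - k - 1, by push_cast [hk, hr]; ring⟩
      have hr1 : sval ℓ ^ (d - (n:ℤ)) ≠ 1 := sval_zpow_ne_one_of_odd hℓ hodd
      have hgeo : ∑ m ∈ Finset.range (4*ℓ), (sval ℓ ^ (d - (n:ℤ))) ^ m = 0 := by
        rw [geom_sum_eq hr1]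
        have : (sval ℓ ^ (d - (n:ℤ))) ^ (4*ℓ) = 1 := by
          rw [← zpow_natCast (sval ℓ ^ (d - (n:ℤ))) (4*ℓ), ← zpow_mul]
          exact (sval_zpow_eq_one_iff hℓ _).mpr ⟨d - n, by push_cast; ring⟩
        rw [this, sub_self, zero_div]
      rw [hgeo, zero_smul]
      exact zero_mem _
  | zero => rw [map_zero]; exact zero_mem _
  | add u v _ _ hu hv => rw [map_add]; exact add_mem hu hv
  | smul c u _ hu => rw [map_smul]; exact Subalgebra.smul_mem _ hu _

/-! The `core` map: `a ⊗ b ↦ a * x * S b`. -/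

def core (ℓ : ℕ) (S : Uq ℓ →ₗ[ℂ] Uq ℓ) (x : Uq ℓ) : Uq ℓ ⊗[ℂ] Uq ℓ →ₗ[ℂ] Uq ℓ :=
  TensorProduct.lift (LinearMap.mk₂ ℂ (fun a b => a * x * S b)
    (fun a a' b => by simp only [add_mul])
    (fun c a b => by simp only [smul_mul_assoc])
    (fun a b b' => by simp only [map_add, mul_add])
    (fun c a b => by simp only [map_smul, mul_smul_comm]))

@[simp] lemma core_tmul {ℓ : ℕ} (S : Uq ℓ →ₗ[ℂ] Uq ℓ) (x a b : Uq ℓ) :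
    core ℓ S x (a ⊗ₜ[ℂ] b) = a * x * S b := rfl

lemma adL_eq_core {ℓ : ℕ} (Δ : Uq ℓ →ₐ[ℂ] Uq ℓ ⊗[ℂ] Uq ℓ) (S : Uq ℓ →ₗ[ℂ] Uq ℓ)
    (x a : Uq ℓ) : adL ℓ Δ S x a = core ℓ S x (Δ a) := by
  unfold adL adMap
  simp only [LinearMap.comp_apply, TensorProduct.mk_apply, TensorProduct.map_tmul,
    LinearMap.id_coe, id_eq, AlgHom.toLinearMap_apply]
  induction Δ a using TensorProduct.induction_on with
  | zero => simp only [TensorProduct.tmul_zero, LinearMap.map_zero]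
  | tmul a b =>
    simp only [TensorProduct.map_tmul, LinearMap.id_coe, id_eq,
      LinearEquiv.coe_coe, TensorProduct.leftComm_tmul, LinearMap.mul'_apply,
      core_tmul, mul_assoc]
  | add u v hu hv =>
    simp only [TensorProduct.tmul_add, map_add, hu, hv]

lemma core_mul {ℓ : ℕ} {S : Uq ℓ →ₗ[ℂ] Uq ℓ}
    (hSmul : ∀ a b : Uq ℓ, S (a * b) = S b * S a) (x : Uq ℓ)
    (u v : Uq ℓ ⊗[ℂ] Uq ℓ) :
    core ℓ S x (u * v) = core ℓ S (core ℓ S x v) u := by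
  induction u using TensorProduct.induction_on with
  | zero => simp
  | add u1 u2 h1 h2 => simp only [add_mul, map_add, h1, h2]
  | tmul a b =>
    induction v using TensorProduct.induction_on with
    | zero => simp
    | add v1 v2 g1 g2 =>
      simp only [mul_add, map_add, core_tmul, g1, g2, mul_add, add_mul]
    | tmul c d =>
      simp only [Algebra.TensorProduct.tmul_mul_tmul, core_tmul, hSmul, mul_assoc]

lemma main_sum_mem {ℓ : ℕ} (hℓ : ℓ ≠ 0) (z : ℕ → Uq ℓ) (hz : ∀ j, z j ∈ Uev ℓ)
    (c : ℕ → ℂ) :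
    ∑ m ∈ Finset.range (4*ℓ), ∑ n ∈ Finset.range (4*ℓ), ∑ j ∈ Finset.range ℓ,
      (sval ℓ ^ (-(m*n : ℤ)) * c j) •
        (gK ℓ ^ m * z j * gKinv ℓ ^ m * (gK ℓ ^ n * gF ℓ ^ j)) ∈ Uev ℓ := by
  rw [Finset.sum_comm]
  refine sum_mem fun n _ => ?_
  rw [Finset.sum_comm]
  refine sum_mem fun j _ => ?_
  have heq : ∑ m ∈ Finset.range (4*ℓ), (sval ℓ ^ (-(m*n : ℤ)) * c j) •
        (gK ℓ ^ m * z j * gKinv ℓ ^ m * (gK ℓ ^ n * gF ℓ ^ j))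
      = c j • (((∑ m ∈ Finset.range (4*ℓ),
          (sval ℓ ^ (-(m*n:ℤ))) • (gK ℓ ^ m * z j * gKinv ℓ ^ m)) * gK ℓ ^ n) * gF ℓ ^ j) := by
    rw [Finset.sum_mul, Finset.sum_mul, Finset.smul_sum]
    refine Finset.sum_congr rfl fun m _ => ?_
    rw [smul_mul_assoc, smul_mul_assoc, smul_smul, mul_comm (c j)]
    congr 1
    simp only [mul_assoc]
  rw [heq]
  exact Subalgebra.smul_mem _ (mul_mem (G_mem hℓ n (hz j)) (pow_mem (gF_mem ℓ) j)) _

lemma Rmat_eq (ℓ : ℕ) :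
    Rmat ℓ = ((4 * ℓ : ℂ))⁻¹ •
      ∑ m ∈ Finset.range (4*ℓ), ∑ n ∈ Finset.range (4*ℓ), ∑ j ∈ Finset.range ℓ,
        (sval ℓ ^ (-(m*n:ℤ)) *
          (((tval ℓ - (tval ℓ)⁻¹) ^ j / qfact ℓ j) * tval ℓ ^ (j*(j-1)/2))) •
          ((gK ℓ ^ m * gE ℓ ^ j) ⊗ₜ[ℂ] (gK ℓ ^ n * gF ℓ ^ j)) := by
  rw [Rmat, Dmat, smul_mul_assoc]
  refine congrArg (fun u : Uq ℓ ⊗[ℂ] Uq ℓ => ((4 * ℓ : ℂ))⁻¹ • u) ?_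
  rw [Finset.sum_mul]
  refine Finset.sum_congr rfl fun m _ => ?_
  rw [Finset.sum_mul]
  refine Finset.sum_congr rfl fun n _ => ?_
  rw [smul_mul_assoc, Finset.mul_sum, Finset.smul_sum]
  refine Finset.sum_congr rfl fun j _ => ?_
  rw [mul_smul_comm, smul_smul, Algebra.TensorProduct.tmul_mul_tmul]

end Aux

/-- For `x ∈ U^ev`, the element `Σ S⁻¹(ad_{R₁}(x)) · R₂` of `U_ζ`
lies in `U^ev`.  Here `Sinv` is the inverse of the antipode `S`. -/
theorem Sinv_adR1_mul_R2_mem_Uev (ℓ : ℕ) (hℓ : 1 < ℓ)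
    (Δ : Uq ℓ →ₐ[ℂ] Uq ℓ ⊗[ℂ] Uq ℓ)
    (hΔK : Δ (gK ℓ) = gK ℓ ⊗ₜ[ℂ] gK ℓ)
    (hΔKinv : Δ (gKinv ℓ) = gKinv ℓ ⊗ₜ[ℂ] gKinv ℓ)
    (hΔE : Δ (gE ℓ) = 1 ⊗ₜ[ℂ] gE ℓ + gE ℓ ⊗ₜ[ℂ] (gK ℓ ^ 2))
    (hΔF : Δ (gF ℓ) = gF ℓ ⊗ₜ[ℂ] 1 + (gKinv ℓ ^ 2) ⊗ₜ[ℂ] gF ℓ)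
    (S : Uq ℓ →ₗ[ℂ] Uq ℓ)
    (hS1 : S 1 = 1) (hSmul : ∀ a b : Uq ℓ, S (a * b) = S b * S a)
    (hSK : S (gK ℓ) = gKinv ℓ) (hSKinv : S (gKinv ℓ) = gK ℓ)
    (hSE : S (gE ℓ) = -(gE ℓ * gKinv ℓ ^ 2)) (hSF : S (gF ℓ) = -(gK ℓ ^ 2 * gF ℓ))
    (Sinv : Uq ℓ →ₗ[ℂ] Uq ℓ)
    (hSinvS : ∀ a : Uq ℓ, Sinv (S a) = a) (hSSinv : ∀ a : Uq ℓ, S (Sinv a) = a)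
    (x : Uq ℓ) (hx : x ∈ Uev ℓ) :
    LinearMap.mul' ℂ (Uq ℓ)
        (TensorProduct.map (Sinv ∘ₗ adL ℓ Δ S x) LinearMap.id (Rmat ℓ)) ∈ Uev ℓ := by
  have hℓ0 : ℓ ≠ 0 := by omega
  -- antipode on powers of `K`, `K⁻¹`
  have hSKpow : ∀ m : ℕ, S (gK ℓ ^ m) = gKinv ℓ ^ m := by
    intro m; induction m with
    | zero => simpa using hS1
    | succ m ih => rw [pow_succ, hSmul, ih, hSK, ← pow_succ']
  have hSKinvpow : ∀ m : ℕ, S (gKinv ℓ ^ m) = gK ℓ ^ m := by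
    intro m; induction m with
    | zero => simpa using hS1
    | succ m ih => rw [pow_succ, hSmul, ih, hSKinv, ← pow_succ']
  -- the inverse antipode is an anti-homomorphism
  have hSinv_mul : ∀ a b : Uq ℓ, Sinv (a * b) = Sinv b * Sinv a := by
    intro a b
    have h : a * b = S (Sinv b * Sinv a) := by rw [hSmul, hSSinv, hSSinv]
    rw [h, hSinvS]
  have hSinv1 : Sinv (1 : Uq ℓ) = 1 := by
    conv_lhs => rw [← hS1]
    rw [hSinvS]
  have hSinvKpow : ∀ m : ℕ, Sinv (gK ℓ ^ m) = gKinv ℓ ^ m := by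
    intro m; rw [← hSKinvpow m, hSinvS]
  have hSinvKinvpow : ∀ m : ℕ, Sinv (gKinv ℓ ^ m) = gK ℓ ^ m := by
    intro m; rw [← hSKpow m, hSinvS]
  -- values of `Sinv` on the generators of `Uev`
  have hSinvE : Sinv (gE ℓ) = -(gKinv ℓ ^ 2 * gE ℓ) := by
    have h : S (-(gKinv ℓ ^ 2 * gE ℓ)) = gE ℓ := by
      rw [map_neg, hSmul, hSE, hSKinvpow,
        show -(gE ℓ * gKinv ℓ ^ 2) * gK ℓ ^ 2 = -(gE ℓ * gKinv ℓ ^ 2 * gK ℓ ^ 2)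
          from neg_mul (gE ℓ * gKinv ℓ ^ 2) (gK ℓ ^ 2),
        neg_neg, mul_assoc, gKinvpow_mul_gKpow, mul_one]
    have h3 := congrArg Sinv h
    rw [hSinvS] at h3
    exact h3.symm
  have hSinvF : Sinv (gF ℓ) = -(gF ℓ * gK ℓ ^ 2) := by
    have h : S (-(gF ℓ * gK ℓ ^ 2)) = gF ℓ := by
      rw [map_neg, hSmul, hSF, hSKpow,
        show gKinv ℓ ^ 2 * -(gK ℓ ^ 2 * gF ℓ) = -(gKinv ℓ ^ 2 * (gK ℓ ^ 2 * gF ℓ))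
          from mul_neg (gKinv ℓ ^ 2) (gK ℓ ^ 2 * gF ℓ),
        neg_neg, ← mul_assoc, gKinvpow_mul_gKpow, one_mul]
    have h3 := congrArg Sinv h
    rw [hSinvS] at h3
    exact h3.symm
  -- `Sinv` preserves `Uev`
  have hSinv_mem : ∀ y ∈ Uev ℓ, Sinv y ∈ Uev ℓ := by
    intro y hy
    induction hy using Algebra.adjoin_induction with
    | mem a ha =>
      simp only [Set.mem_insert_iff, Set.mem_singleton_iff] at ha
      rcases ha with rfl | rfl | rfl | rfl
      · rw [hSinvE]; exact neg_mem (mul_mem (gKinv2_mem ℓ) (gE_mem ℓ))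
      · rw [hSinvF]; exact neg_mem (mul_mem (gF_mem ℓ) (gK2_mem ℓ))
      · rw [hSinvKpow 2]; exact gKinv2_mem ℓ
      · rw [hSinvKinvpow 2]; exact gK2_mem ℓ
    | algebraMap r =>
      rw [Algebra.algebraMap_eq_smul_one, map_smul, hSinv1]
      exact Subalgebra.smul_mem _ (one_mem _) _
    | add a b _ _ ha hb => rw [map_add]; exact add_mem ha hb
    | mul a b _ _ ha hb => rw [hSinv_mul]; exact mul_mem hb ha
  -- the adjoint action of `E^j` preserves `Uev`
  have hcoreE : ∀ w ∈ Uev ℓ, core ℓ S w (Δ (gE ℓ)) ∈ Uev ℓ := by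
    intro w hw
    rw [hΔE, map_add, core_tmul, core_tmul, hSE, hSKpow 2]
    refine add_mem ?_ ?_
    · rw [one_mul]
      exact mul_mem hw (neg_mem (mul_mem (gE_mem ℓ) (gKinv2_mem ℓ)))
    · exact mul_mem (mul_mem (gE_mem ℓ) hw) (gKinv2_mem ℓ)
  have hadE : ∀ j : ℕ, ∀ w ∈ Uev ℓ, core ℓ S w (Δ (gE ℓ ^ j)) ∈ Uev ℓ := by
    intro j
    induction j with
    | zero =>
      intro w hw
      rw [pow_zero, map_one, Algebra.TensorProduct.one_def, core_tmul, hS1,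
        one_mul, mul_one]
      exact hw
    | succ j ih =>
      intro w hw
      rw [pow_succ, map_mul, core_mul hSmul]
      exact ih _ (hcoreE w hw)
  have hzU : ∀ j : ℕ, Sinv (adL ℓ Δ S x (gE ℓ ^ j)) ∈ Uev ℓ := by
    intro j
    refine hSinv_mem _ ?_
    rw [adL_eq_core]
    exact hadE j x hx
  -- the key computation of `Sinv ∘ ad` on `K^m E^j`
  have key : ∀ m j : ℕ, Sinv (adL ℓ Δ S x (gK ℓ ^ m * gE ℓ ^ j))
      = gK ℓ ^ m * Sinv (adL ℓ Δ S x (gE ℓ ^ j)) * gKinv ℓ ^ m := by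
    intro m j
    rw [adL_eq_core, map_mul, map_pow, hΔK, core_mul hSmul,
      Algebra.TensorProduct.tmul_pow, core_tmul, hSKpow m, ← adL_eq_core,
      hSinv_mul, hSinv_mul, hSinvKpow m, hSinvKinvpow m, ← mul_assoc]
  -- expand the `R`-matrix and conclude
  rw [Rmat_eq ℓ]
  simp only [map_smul, map_sum, TensorProduct.map_tmul, LinearMap.mul'_apply,
    LinearMap.id_coe, id_eq, LinearMap.coe_comp, Function.comp_apply, key]
  exact Subalgebra.smul_mem _
    (main_sum_mem hℓ0 (fun j => Sinv (adL ℓ Δ S x (gE ℓ ^ j))) hzU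
      (fun j => ((tval ℓ - (tval ℓ)⁻¹) ^ j / qfact ℓ j) * tval ℓ ^ (j*(j-1)/2))) _

end RestrictedQsl2
end
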